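/- Action of a homogeneous paradifferential operator on Sobolev spaces (Fourier-coefficient form): Let m ∈ ℝ, μ ≥ 0, and s0, s ∈ ℝ with s0 > μ + 1/2. Fix δ ∈ (0, 1/4] and a function χ : ℝ → ℝ with 0 ≤ χ ≤ 1 and χ(x) = 0 whenever |x| ≥ 1.9. Let C₀ > 0 and, for each n ∈ ℤ \ {0}, let a_n : ℝ → ℂ satisfy |a_n(ξ)| ≤ C₀·|n|^μ·⟨ξ⟩^m for all ξ ∈ ℝ. Then there exists a constant C > 0, depending only on s, s0, m, μ, δ, C₀, such that for all sequences u, v : ℤ → ℂ with ‖u‖_{s0} < ∞ and ‖v‖_s < ∞, the sequence w : ℤ → ℂ defined by w_j := Σ_{k ∈ ℤ, k ≠ j} χ((j−k)/(δ·⟨j+k⟩))·a_{j−k}((j+k)/2)·u_{j−k}·v_k (for each j this sum has only finitely many nonzero terms) satisfies ‖w‖_{s−m} ≤ C·‖u‖_{s0}·‖v‖_s. -/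

import Mathlib

/-- The `H^s` Sobolev norm of a sequence of Fourier coefficients. -/
noncomputable def Hnorm (s : ℝ) (u : ℤ → ℂ) : ℝ :=
  Real.sqrt (∑' j : ℤ, (max 1 |(j : ℝ)|) ^ (2 * s) * ‖u j‖ ^ 2)

/-- Finiteness of the `H^s` Sobolev norm of a sequence of Fourier coefficients. -/
def HSummable (s : ℝ) (u : ℤ → ℂ) : Prop :=
  Summable fun j : ℤ => (max 1 |(j : ℝ)|) ^ (2 * s) * ‖u j‖ ^ 2

/-- The Fourier coefficients of the Bony-Weyl paradifferential operator with homogeneous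
symbol `a(u;x,ξ) = ∑_{n ≠ 0} a_n(ξ) u_n e^{inx}` applied to `v`, with cut-off `χ(·/δ·)`. -/
noncomputable def paraW (δ : ℝ) (χ : ℝ → ℝ) (a : ℤ → ℝ → ℂ) (u v : ℤ → ℂ) (j : ℤ) : ℂ :=
  ∑' k : ℤ, if k = j then 0 else
    (χ (((j : ℝ) - (k : ℝ)) / (δ * max 1 |(j : ℝ) + (k : ℝ)|)) : ℂ) *
      a (j - k) (((j : ℝ) + (k : ℝ)) / 2) * u (j - k) * v k


open MeasureTheory ENNReal
lemma cs_ennreal (a b : ℤ → ℝ≥0∞) :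
    (∑' k : ℤ, a k * b k) ^ 2 ≤ (∑' k, a k ^ 2) * (∑' k, b k ^ 2) := by
  have h := ENNReal.lintegral_mul_le_Lp_mul_Lq (Measure.count : Measure ℤ)
    (Real.HolderConjugate.two_two) (measurable_of_countable a).aemeasurable
    (measurable_of_countable b).aemeasurable
  simp only [Pi.mul_apply, MeasureTheory.lintegral_count] at h
  have h2 : ∀ x : ℝ≥0∞, x ^ (2:ℝ) = x ^ 2 := fun x => by
    rw [← ENNReal.rpow_natCast x 2]; norm_num
  simp only [h2] at h
  calc (∑' k : ℤ, a k * b k) ^ 2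
      ≤ ((∑' k, a k ^ 2) ^ (1/(2:ℝ)) * (∑' k, b k ^ 2) ^ (1/(2:ℝ))) ^ 2 := by
        exact pow_le_pow_left₀ zero_le h 2
    _ = (∑' k, a k ^ 2) * (∑' k, b k ^ 2) := by
        rw [mul_pow, ← ENNReal.rpow_natCast (_ ^ (1/(2:ℝ))), ← ENNReal.rpow_natCast (_ ^ (1/(2:ℝ))),
          ← ENNReal.rpow_mul, ← ENNReal.rpow_mul]
        norm_num

lemma half_mul_half (x : ℝ≥0∞) : x ^ ((2:ℝ)⁻¹) * x ^ ((2:ℝ)⁻¹) = x := by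
  rw [← sq, ← ENNReal.rpow_natCast (x ^ ((2:ℝ)⁻¹)), ← ENNReal.rpow_mul]
  norm_num

lemma half_sq (x : ℝ≥0∞) : (x ^ ((2:ℝ)⁻¹)) ^ 2 = x := by
  rw [sq, half_mul_half]

lemma cs_ennreal' (a b : ℤ → ℝ≥0∞) :
    (∑' k : ℤ, a k * b k) ^ 2 ≤ (∑' k, a k) * (∑' k, a k * b k ^ 2) := by
  have h := cs_ennreal (fun k => a k ^ ((2:ℝ)⁻¹)) (fun k => a k ^ ((2:ℝ)⁻¹) * b k)
  simp only [← mul_assoc, half_mul_half, mul_pow, half_sq] at h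
  exact h

lemma rpow_ratio {x y t : ℝ} (hx : 1 ≤ x) (hy : 1 ≤ y) (hxy : x ≤ 4 * y) (hyx : y ≤ 4 * x) :
    x ^ t ≤ 4 ^ |t| * y ^ t := by
  have hx0 : (0:ℝ) < x := lt_of_lt_of_le one_pos hx
  have hy0 : (0:ℝ) < y := lt_of_lt_of_le one_pos hy
  rcases le_or_gt 0 t with ht | ht
  · rw [abs_of_nonneg ht]
    calc x ^ t ≤ (4 * y) ^ t := Real.rpow_le_rpow hx0.le hxy ht
      _ = 4 ^ t * y ^ t := Real.mul_rpow (by norm_num) hy0.le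
  · rw [abs_of_neg ht]
    have h4 : y / 4 ≤ x := by linarith
    calc x ^ t ≤ (y / 4) ^ t := Real.rpow_le_rpow_of_nonpos (by positivity) h4 ht.le
      _ = 4 ^ (-t) * y ^ t := by
          rw [Real.div_rpow hy0.le (by norm_num : (0:ℝ) ≤ 4),
            Real.rpow_neg (by norm_num : (0:ℝ) ≤ 4), div_eq_mul_inv]
          ring

lemma support_bounds {j k : ℤ} {δ : ℝ} (hδ0 : 0 < δ) (hδ1 : δ ≤ 1/4)
    (h : |((j:ℝ) - k) / (δ * max 1 |(j:ℝ) + k|)| < 1.9) :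
    max 1 |(j:ℝ)| ≤ 4 * max 1 |(k:ℝ)| ∧ max 1 |(k:ℝ)| ≤ 4 * max 1 |(j:ℝ)| ∧
    max 1 |((j:ℝ) + k) / 2| ≤ 4 * max 1 |(k:ℝ)| ∧
    max 1 |(k:ℝ)| ≤ 4 * max 1 |((j:ℝ) + k) / 2| := by
  set J := max 1 |(j:ℝ)| with hJ
  set K := max 1 |(k:ℝ)| with hK
  set P := max 1 |(j:ℝ) + k| with hPd
  set M := max 1 |((j:ℝ) + k) / 2| with hM
  have hJ1 : 1 ≤ J := le_max_left _ _
  have hK1 : 1 ≤ K := le_max_left _ _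
  have hP1 : 1 ≤ P := le_max_left _ _
  have hM1 : 1 ≤ M := le_max_left _ _
  have hJa : |(j:ℝ)| ≤ J := le_max_right _ _
  have hKa : |(k:ℝ)| ≤ K := le_max_right _ _
  have hPa : |(j:ℝ) + k| ≤ P := le_max_right _ _
  have hMa : |((j:ℝ) + k) / 2| ≤ M := le_max_right _ _
  have hP0 : 0 < δ * P := by positivity
  have hD : |(j:ℝ) - k| < 0.475 * P := by
    rw [abs_div, abs_of_pos hP0] at h
    have := (div_lt_iff₀ hP0).mp h
    nlinarith [abs_nonneg ((j:ℝ) - k), hP1]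
  -- basic triangle facts
  have t1 : |(j:ℝ)| ≤ (|(j:ℝ) + k| + |(j:ℝ) - k|) / 2 := by
    have : (2:ℝ) * j = ((j:ℝ) + k) + ((j:ℝ) - k) := by ring
    have h2 := abs_add_le ((j:ℝ) + k) ((j:ℝ) - k)
    rw [← this, abs_mul] at h2
    simp only [abs_two] at h2
    linarith
  have t2 : |(k:ℝ)| ≤ (|(j:ℝ) + k| + |(j:ℝ) - k|) / 2 := by
    have : (2:ℝ) * k = ((j:ℝ) + k) - ((j:ℝ) - k) := by ring
    have h2 := abs_sub ((j:ℝ) + k) ((j:ℝ) - k)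
    rw [← this, abs_mul] at h2
    simp only [abs_two] at h2
    linarith
  have t3 : |(j:ℝ) + k| ≤ 2 * |(k:ℝ)| + |(j:ℝ) - k| := by
    have : ((j:ℝ) + k) = (2:ℝ) * k + ((j:ℝ) - k) := by ring
    calc |(j:ℝ) + k| = |(2:ℝ) * k + ((j:ℝ) - k)| := by rw [← this]
      _ ≤ |(2:ℝ) * k| + |(j:ℝ) - k| := abs_add_le _ _
      _ = 2 * |(k:ℝ)| + |(j:ℝ) - k| := by rw [abs_mul, abs_two]
  have t4 : |(j:ℝ) + k| ≤ 2 * |(j:ℝ)| + |(j:ℝ) - k| := by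
    have : ((j:ℝ) + k) = (2:ℝ) * j - ((j:ℝ) - k) := by ring
    calc |(j:ℝ) + k| = |(2:ℝ) * j - ((j:ℝ) - k)| := by rw [← this]
      _ ≤ |(2:ℝ) * j| + |(j:ℝ) - k| := abs_sub _ _
      _ = 2 * |(j:ℝ)| + |(j:ℝ) - k| := by rw [abs_mul, abs_two]
  have hPK : P ≤ 4 * K := by
    have : P ≤ 2 * K + 0.475 * P := by
      apply max_le (by linarith)
      calc |(j:ℝ) + k| ≤ 2 * |(k:ℝ)| + |(j:ℝ) - k| := t3
        _ ≤ 2 * K + 0.475 * P := by linarith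
    linarith
  have hPJ : P ≤ 4 * J := by
    have : P ≤ 2 * J + 0.475 * P := by
      apply max_le (by linarith)
      calc |(j:ℝ) + k| ≤ 2 * |(j:ℝ)| + |(j:ℝ) - k| := t4
        _ ≤ 2 * J + 0.475 * P := by linarith
    linarith
  have hJP : J ≤ P := by
    apply max_le hP1
    calc |(j:ℝ)| ≤ (|(j:ℝ) + k| + |(j:ℝ) - k|) / 2 := t1
      _ ≤ (P + 0.475 * P) / 2 := by linarith
      _ ≤ P := by linarith
  have hKP : K ≤ P := by
    apply max_le hP1
    calc |(k:ℝ)| ≤ (|(j:ℝ) + k| + |(j:ℝ) - k|) / 2 := t2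
      _ ≤ (P + 0.475 * P) / 2 := by linarith
      _ ≤ P := by linarith
  have hMP : M ≤ P := by
    apply max_le hP1
    calc |((j:ℝ) + k) / 2| = |(j:ℝ) + k| / 2 := by rw [abs_div, abs_two]
      _ ≤ P := by linarith
  have hPM : P ≤ 2 * M := by
    apply max_le (by linarith)
    have : |(j:ℝ) + k| = 2 * |((j:ℝ) + k) / 2| := by rw [abs_div, abs_two]; ring
    linarith
  exact ⟨by linarith, by linarith, by linarith, by linarith⟩

lemma summable_max_rpow {t : ℝ} (ht : t < -1) :
    Summable fun n : ℤ => (max 1 |(n:ℝ)|) ^ t := by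
  have hb : 1 < -t := by linarith
  have h1 : Summable fun n : ℤ => |(n:ℝ)| ^ (-(-t)) := Real.summable_abs_int_rpow hb
  rw [neg_neg] at h1
  have h2 : Summable fun n : ℤ => (if n = 0 then (1:ℝ) else 0) := by
    apply summable_of_finite_support
    apply Set.Finite.subset (Set.finite_singleton (0:ℤ))
    intro n hn
    simp only [Function.mem_support] at hn
    by_contra h
    exact hn (if_neg h)
  refine (h1.add h2).congr fun n => ?_
  by_cases hn : n = 0
  · subst hn
    simp [Real.zero_rpow (by linarith : t ≠ 0)]
  · have h1n : 1 ≤ |(n:ℝ)| := by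
      rw [← Int.cast_abs]
      exact_mod_cast Int.one_le_abs hn
    simp [if_neg hn, max_eq_right h1n]

lemma pointwise_bound {m μ s δ C₀ : ℝ} (hμ : 0 ≤ μ) (hδ0 : 0 < δ) (hδ1 : δ ≤ 1/4)
    (hC₀ : 0 < C₀) {χ : ℝ → ℝ} (hχ0 : ∀ x, 0 ≤ χ x) (hχ1 : ∀ x, χ x ≤ 1)
    (hχs : ∀ x, (1.9:ℝ) ≤ |x| → χ x = 0) {a : ℤ → ℝ → ℂ}
    (ha : ∀ n : ℤ, n ≠ 0 → ∀ ξ : ℝ, ‖a n ξ‖ ≤ C₀ * |(n:ℝ)| ^ μ * (max 1 |ξ|) ^ m)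
    (u v : ℤ → ℂ) (j k : ℤ) :
    (max 1 |(j:ℝ)|) ^ (s - m) * ‖if k = j then 0 else
      (χ (((j:ℝ) - k) / (δ * max 1 |(j:ℝ) + k|)) : ℂ) *
        a (j - k) (((j:ℝ) + k) / 2) * u (j - k) * v k‖ ≤
    (C₀ * 4 ^ |m| * 4 ^ |s - m|) * ((max 1 |((j - k : ℤ):ℝ)|) ^ μ * ‖u (j - k)‖) *
      ((max 1 |(k:ℝ)|) ^ s * ‖v k‖) := by
  by_cases hkj : k = j
  · rw [if_pos hkj]
    simp only [norm_zero, mul_zero]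
    positivity
  rw [if_neg hkj]
  set x := ((j:ℝ) - k) / (δ * max 1 |(j:ℝ) + k|) with hx
  by_cases hsup : (1.9:ℝ) ≤ |x|
  · rw [hχs x hsup]
    simp only [Complex.ofReal_zero, zero_mul, norm_zero, mul_zero]
    positivity
  push_neg at hsup
  obtain ⟨b1, b2, b3, b4⟩ := support_bounds hδ0 hδ1 hsup
  set J := max 1 |(j:ℝ)|
  set K := max 1 |(k:ℝ)|
  set M := max 1 |((j:ℝ) + k) / 2|
  have hJ1 : 1 ≤ J := le_max_left _ _
  have hK1 : 1 ≤ K := le_max_left _ _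
  have hM1 : 1 ≤ M := le_max_left _ _
  have hjk0 : (j - k : ℤ) ≠ 0 := sub_ne_zero.mpr (Ne.symm hkj)
  have hjk1 : (1:ℝ) ≤ |((j - k : ℤ):ℝ)| := by
    rw [← Int.cast_abs]; exact_mod_cast Int.one_le_abs hjk0
  have hDeq : max 1 |((j - k : ℤ):ℝ)| = |((j - k : ℤ):ℝ)| := max_eq_right hjk1
  have habsa : ‖a (j - k) (((j:ℝ) + k) / 2)‖ ≤
      C₀ * (max 1 |((j - k : ℤ):ℝ)|) ^ μ * M ^ m := by
    rw [hDeq]; exact ha (j - k) hjk0 _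
  have habs : ‖(χ x : ℂ) * a (j - k) (((j:ℝ) + k) / 2) * u (j - k) * v k‖ ≤
      (C₀ * (max 1 |((j - k : ℤ):ℝ)|) ^ μ * M ^ m) * ‖u (j - k)‖ *
        ‖v k‖ := by
    simp only [norm_mul]
    have hχx : ‖(χ x : ℂ)‖ ≤ 1 := by
      rw [Complex.norm_real, Real.norm_of_nonneg (hχ0 x)]; exact hχ1 x
    have h1 : ‖(χ x : ℂ)‖ * ‖a (j - k) (((j:ℝ) + k) / 2)‖ ≤
        C₀ * (max 1 |((j - k : ℤ):ℝ)|) ^ μ * M ^ m := by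
      calc _ ≤ 1 * (C₀ * (max 1 |((j - k : ℤ):ℝ)|) ^ μ * M ^ m) :=
            mul_le_mul hχx habsa (by positivity) zero_le_one
        _ = _ := one_mul _
    exact mul_le_mul_of_nonneg_right
      (mul_le_mul_of_nonneg_right h1 (norm_nonneg _)) (norm_nonneg _)
  have key : J ^ (s - m) * M ^ m ≤ 4 ^ |s - m| * 4 ^ |m| * K ^ s := by
    have k1 : J ^ (s - m) ≤ 4 ^ |s - m| * K ^ (s - m) := rpow_ratio hJ1 hK1 b1 b2
    have k2 : M ^ m ≤ 4 ^ |m| * K ^ m := rpow_ratio hM1 hK1 b3 b4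
    calc J ^ (s - m) * M ^ m ≤ (4 ^ |s - m| * K ^ (s - m)) * (4 ^ |m| * K ^ m) := by
          apply mul_le_mul k1 k2 (by positivity) (by positivity)
      _ = 4 ^ |s - m| * 4 ^ |m| * (K ^ (s - m) * K ^ m) := by ring
      _ = 4 ^ |s - m| * 4 ^ |m| * K ^ s := by
          rw [← Real.rpow_add (by linarith : (0:ℝ) < K), sub_add_cancel]
  calc J ^ (s - m) * ‖(χ x : ℂ) * a (j - k) (((j:ℝ) + k) / 2) * u (j - k) * v k‖
      ≤ J ^ (s - m) * ((C₀ * (max 1 |((j - k : ℤ):ℝ)|) ^ μ * M ^ m) * ‖u (j - k)‖ *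
          ‖v k‖) := by
        apply mul_le_mul_of_nonneg_left habs (by positivity)
    _ = (J ^ (s - m) * M ^ m) * (C₀ * (max 1 |((j - k : ℤ):ℝ)|) ^ μ * ‖u (j - k)‖ *
          ‖v k‖) := by ring
    _ ≤ (4 ^ |s - m| * 4 ^ |m| * K ^ s) * (C₀ * (max 1 |((j - k : ℤ):ℝ)|) ^ μ *
          ‖u (j - k)‖ * ‖v k‖) := by
        apply mul_le_mul_of_nonneg_right key (by positivity)
    _ = (C₀ * 4 ^ |m| * 4 ^ |s - m|) * ((max 1 |((j - k : ℤ):ℝ)|) ^ μ * ‖u (j - k)‖) *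
          ((max 1 |(k:ℝ)|) ^ s * ‖v k‖) := by ring

lemma rpow_two_mul {x : ℝ} (hx : 0 < x) (t : ℝ) : x ^ (2 * t) = (x ^ t) ^ 2 := by
  rw [two_mul, Real.rpow_add hx, sq]


/-- Action of a homogeneous paradifferential operator on Sobolev spaces
(Fourier-coefficient form): `‖Op^{BW}(a(u;·))v‖_{s-m} ≤ C ‖u‖_{s0} ‖v‖_s`. -/
theorem paradifferential_action_homogeneous (m μ s0 s : ℝ) (hμ : 0 ≤ μ)
    (hs0 : μ + 1 / 2 < s0) (δ : ℝ) (hδ0 : 0 < δ) (hδ1 : δ ≤ 1 / 4)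
    (C₀ : ℝ) (hC₀ : 0 < C₀) :
    ∃ C : ℝ, 0 < C ∧
      ∀ χ : ℝ → ℝ, (∀ x : ℝ, 0 ≤ χ x) → (∀ x : ℝ, χ x ≤ 1) →
        (∀ x : ℝ, (1.9 : ℝ) ≤ |x| → χ x = 0) →
      ∀ a : ℤ → ℝ → ℂ,
        (∀ n : ℤ, n ≠ 0 → ∀ ξ : ℝ,
          ‖a n ξ‖ ≤ C₀ * |(n : ℝ)| ^ μ * (max 1 |ξ|) ^ m) →
      ∀ u v : ℤ → ℂ, HSummable s0 u → HSummable s v →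
        HSummable (s - m) (paraW δ χ a u v) ∧
          Hnorm (s - m) (paraW δ χ a u v) ≤ C * Hnorm s0 u * Hnorm s v := by
  set C₂ : ℝ := C₀ * 4 ^ |m| * 4 ^ |s - m| with hC₂def
  have hC₂ : 0 < C₂ := by positivity
  have hexp : 2 * (μ - s0) < -1 := by linarith
  have hKpsum : Summable fun n : ℤ => (max 1 |(n:ℝ)|) ^ (2 * (μ - s0)) :=
    summable_max_rpow hexp
  set Kp : ℝ := ∑' n : ℤ, (max 1 |(n:ℝ)|) ^ (2 * (μ - s0)) with hKpdef
  have hKp1 : (1:ℝ) ≤ Kp := by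
    have h0 : ((max 1 |((0:ℤ):ℝ)|) ^ (2 * (μ - s0)) : ℝ) = 1 := by
      simp
    calc (1:ℝ) = (max 1 |((0:ℤ):ℝ)|) ^ (2 * (μ - s0)) := h0.symm
      _ ≤ Kp := Summable.le_tsum hKpsum 0 fun n _ => by positivity
  have hKp0 : (0:ℝ) ≤ Kp := by linarith
  refine ⟨C₂ * Real.sqrt Kp, by positivity, ?_⟩
  intro χ hχ0 hχ1 hχs a ha u v hu hv
  set U : ℝ := ∑' n : ℤ, (max 1 |(n:ℝ)|) ^ (2 * s0) * ‖u n‖ ^ 2 with hUdef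
  set V : ℝ := ∑' n : ℤ, (max 1 |(n:ℝ)|) ^ (2 * s) * ‖v n‖ ^ 2 with hVdef
  have hU0 : 0 ≤ U := tsum_nonneg fun n => by positivity
  have hV0 : 0 ≤ V := tsum_nonneg fun n => by positivity
  set Fe : ℤ → ℝ≥0∞ := fun n => ENNReal.ofReal ((max 1 |(n:ℝ)|) ^ μ * ‖u n‖)
    with hFedef
  set Ge : ℤ → ℝ≥0∞ := fun k => ENNReal.ofReal ((max 1 |(k:ℝ)|) ^ s * ‖v k‖)
    with hGedef
  set c2 : ℝ≥0∞ := ENNReal.ofReal C₂ with hc2def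
  set T : ℤ → ℤ → ℂ := fun j k => if k = j then 0 else
    (χ (((j : ℝ) - (k : ℝ)) / (δ * max 1 |(j : ℝ) + (k : ℝ)|)) : ℂ) *
      a (j - k) (((j : ℝ) + (k : ℝ)) / 2) * u (j - k) * v k with hTdef
  have hwj : ∀ j, paraW δ χ a u v j = ∑' k, T j k := fun j => rfl
  -- Step 1 : pointwise bound in ℝ≥0∞
  have step1 : ∀ j k : ℤ, ENNReal.ofReal ((max 1 |(j:ℝ)|) ^ (s - m) * ‖T j k‖) ≤
      c2 * Fe (j - k) * Ge k := by
    intro j k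
    refine le_trans (ENNReal.ofReal_le_ofReal
      (pointwise_bound hμ hδ0 hδ1 hC₀ hχ0 hχ1 hχs ha u v j k)) (le_of_eq ?_)
    rw [ENNReal.ofReal_mul (by positivity), ENNReal.ofReal_mul hC₂.le]
  -- Step 2 : per-j bound
  have step2 : ∀ j : ℤ, ENNReal.ofReal ((max 1 |(j:ℝ)|) ^ (s - m) *
      ‖paraW δ χ a u v j‖) ≤ c2 * ∑' k, Fe (j - k) * Ge k := by
    intro j
    rw [hwj j]
    by_cases hsum : Summable (T j)
    · have hn : Summable fun k => ‖T j k‖ := by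
        have := (summable_norm_iff (f := T j)).mpr hsum
        simpa using this
      have habs : ‖∑' k, T j k‖ ≤ ∑' k, ‖T j k‖ := by
        have := norm_tsum_le_tsum_norm (f := T j) (by simpa using hn)
        simpa using this
      calc ENNReal.ofReal ((max 1 |(j:ℝ)|) ^ (s - m) * ‖∑' k, T j k‖)
          ≤ ENNReal.ofReal ((max 1 |(j:ℝ)|) ^ (s - m) * ∑' k, ‖T j k‖) :=
            ENNReal.ofReal_le_ofReal (by
              apply mul_le_mul_of_nonneg_left habs (by positivity))
        _ = ENNReal.ofReal (∑' k, (max 1 |(j:ℝ)|) ^ (s - m) * ‖T j k‖) := by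
            rw [tsum_mul_left]
        _ = ∑' k, ENNReal.ofReal ((max 1 |(j:ℝ)|) ^ (s - m) * ‖T j k‖) :=
            ENNReal.ofReal_tsum_of_nonneg (fun k => by positivity) (hn.mul_left _)
        _ ≤ ∑' k, c2 * (Fe (j - k) * Ge k) := by
            refine ENNReal.tsum_le_tsum fun k => ?_
            rw [← mul_assoc]; exact step1 j k
        _ = c2 * ∑' k, Fe (j - k) * Ge k := ENNReal.tsum_mul_left
    · rw [tsum_eq_zero_of_not_summable hsum]
      simp
  -- abbreviations for sums
  set SF : ℝ≥0∞ := ∑' n, Fe n with hSFdef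
  have hshift : ∀ j : ℤ, (∑' k, Fe (j - k)) = SF := by
    intro j
    exact (Equiv.subLeft j).tsum_eq Fe
  have hshift' : ∀ k : ℤ, (∑' j : ℤ, Fe (j - k)) = SF := by
    intro k
    exact (Equiv.subRight k).tsum_eq Fe
  -- Step 3 : L ≤ c2^2 * SF^2 * ∑' Ge^2
  set L : ℝ≥0∞ := ∑' j : ℤ, ENNReal.ofReal ((max 1 |(j:ℝ)|) ^ (2 * (s - m)) *
    ‖paraW δ χ a u v j‖ ^ 2) with hLdef
  have hLeq : L = ∑' j : ℤ, (ENNReal.ofReal ((max 1 |(j:ℝ)|) ^ (s - m) *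
      ‖paraW δ χ a u v j‖)) ^ 2 := by
    refine tsum_congr fun j => ?_
    rw [rpow_two_mul (lt_of_lt_of_le one_pos (le_max_left _ _)) (s - m), ← mul_pow,
      ENNReal.ofReal_pow (by positivity)]
  have step3 : L ≤ c2 ^ 2 * SF ^ 2 * ∑' k, Ge k ^ 2 := by
    rw [hLeq]
    calc ∑' j : ℤ, (ENNReal.ofReal ((max 1 |(j:ℝ)|) ^ (s - m) *
        ‖paraW δ χ a u v j‖)) ^ 2
        ≤ ∑' j : ℤ, (c2 * ∑' k, Fe (j - k) * Ge k) ^ 2 :=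
          ENNReal.tsum_le_tsum fun j => pow_le_pow_left₀ zero_le (step2 j) 2
      _ = c2 ^ 2 * ∑' j : ℤ, (∑' k, Fe (j - k) * Ge k) ^ 2 := by
          simp_rw [mul_pow]; rw [ENNReal.tsum_mul_left]
      _ ≤ c2 ^ 2 * ∑' j : ℤ, SF * (∑' k, Fe (j - k) * Ge k ^ 2) := by
          refine mul_le_mul_right (ENNReal.tsum_le_tsum fun j => ?_) _
          have := cs_ennreal' (fun k => Fe (j - k)) Ge
          rwa [hshift j] at this
      _ = c2 ^ 2 * (SF * ∑' j : ℤ, ∑' k, Fe (j - k) * Ge k ^ 2) := by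
          rw [ENNReal.tsum_mul_left]
      _ = c2 ^ 2 * (SF * (SF * ∑' k, Ge k ^ 2)) := by
          congr 2
          rw [ENNReal.tsum_comm]
          calc ∑' k, ∑' j : ℤ, Fe (j - k) * Ge k ^ 2
              = ∑' k, (∑' j : ℤ, Fe (j - k)) * Ge k ^ 2 := by
                refine tsum_congr fun k => ?_
                rw [ENNReal.tsum_mul_right]
            _ = ∑' k, SF * Ge k ^ 2 := by
                refine tsum_congr fun k => ?_
                rw [hshift' k]
            _ = SF * ∑' k, Ge k ^ 2 := ENNReal.tsum_mul_left
      _ = c2 ^ 2 * SF ^ 2 * ∑' k, Ge k ^ 2 := by ring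
  -- Step 4 : SF^2 ≤ ofReal Kp * ofReal U
  have step4 : SF ^ 2 ≤ ENNReal.ofReal Kp * ENNReal.ofReal U := by
    have hfe : ∀ n : ℤ, Fe n = ENNReal.ofReal ((max 1 |(n:ℝ)|) ^ (μ - s0)) *
        ENNReal.ofReal ((max 1 |(n:ℝ)|) ^ s0 * ‖u n‖) := by
      intro n
      rw [← ENNReal.ofReal_mul (by positivity)]
      congr 1
      rw [← mul_assoc, ← Real.rpow_add (lt_of_lt_of_le one_pos (le_max_left _ _)),
        sub_add_cancel]
    calc SF ^ 2 = (∑' n : ℤ, ENNReal.ofReal ((max 1 |(n:ℝ)|) ^ (μ - s0)) *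
        ENNReal.ofReal ((max 1 |(n:ℝ)|) ^ s0 * ‖u n‖)) ^ 2 := by
          rw [hSFdef]; congr 1; exact tsum_congr hfe
      _ ≤ (∑' n : ℤ, (ENNReal.ofReal ((max 1 |(n:ℝ)|) ^ (μ - s0))) ^ 2) *
          (∑' n : ℤ, (ENNReal.ofReal ((max 1 |(n:ℝ)|) ^ s0 * ‖u n‖)) ^ 2) :=
          cs_ennreal _ _
      _ = ENNReal.ofReal Kp * ENNReal.ofReal U := by
          congr 1
          · rw [hKpdef, ENNReal.ofReal_tsum_of_nonneg (fun n => by positivity) hKpsum]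
            refine tsum_congr fun n => ?_
            rw [← ENNReal.ofReal_pow (by positivity),
              rpow_two_mul (lt_of_lt_of_le one_pos (le_max_left _ _))]
          · rw [hUdef, ENNReal.ofReal_tsum_of_nonneg (fun n => by positivity) hu]
            refine tsum_congr fun n => ?_
            rw [← ENNReal.ofReal_pow (by positivity), mul_pow,
              rpow_two_mul (lt_of_lt_of_le one_pos (le_max_left _ _))]
  -- Step 5 : ∑' Ge^2 = ofReal V
  have step5 : (∑' k, Ge k ^ 2) = ENNReal.ofReal V := by
    rw [hVdef, ENNReal.ofReal_tsum_of_nonneg (fun n => by positivity) hv]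
    refine tsum_congr fun n => ?_
    rw [← ENNReal.ofReal_pow (by positivity), mul_pow,
      rpow_two_mul (lt_of_lt_of_le one_pos (le_max_left _ _))]
  -- final bound on L
  have hLR : L ≤ ENNReal.ofReal (C₂ ^ 2 * Kp * U * V) := by
    calc L ≤ c2 ^ 2 * SF ^ 2 * ∑' k, Ge k ^ 2 := step3
      _ ≤ c2 ^ 2 * (ENNReal.ofReal Kp * ENNReal.ofReal U) * ENNReal.ofReal V := by
          rw [step5]
          exact mul_le_mul_left (mul_le_mul_right step4 _) _
      _ = ENNReal.ofReal (C₂ ^ 2 * Kp * U * V) := by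
          rw [hc2def, ← ENNReal.ofReal_pow hC₂.le, ← ENNReal.ofReal_mul (by positivity),
            ← ENNReal.ofReal_mul (by positivity), ← ENNReal.ofReal_mul (by positivity)]
          ring_nf
  have hLtop : L ≠ ⊤ := ne_top_of_le_ne_top ENNReal.ofReal_ne_top hLR
  -- summability
  have hsummW : HSummable (s - m) (paraW δ χ a u v) := by
    have := ENNReal.summable_toReal hLtop
    refine this.congr fun j => ?_
    rw [ENNReal.toReal_ofReal (by positivity)]
  refine ⟨hsummW, ?_⟩
  -- norm bound
  have htsum : (∑' j : ℤ, (max 1 |(j:ℝ)|) ^ (2 * (s - m)) *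
      ‖paraW δ χ a u v j‖ ^ 2) = L.toReal := by
    rw [hLdef, ← ENNReal.ofReal_tsum_of_nonneg (fun j => by positivity) hsummW,
      ENNReal.toReal_ofReal (tsum_nonneg fun j => by positivity)]
  have hle : (∑' j : ℤ, (max 1 |(j:ℝ)|) ^ (2 * (s - m)) *
      ‖paraW δ χ a u v j‖ ^ 2) ≤ C₂ ^ 2 * Kp * U * V := by
    rw [htsum]
    calc L.toReal ≤ (ENNReal.ofReal (C₂ ^ 2 * Kp * U * V)).toReal :=
        ENNReal.toReal_mono ENNReal.ofReal_ne_top hLR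
      _ = C₂ ^ 2 * Kp * U * V := ENNReal.toReal_ofReal (by positivity)
  have hsq2 : C₂ ^ 2 * Kp * U * V = (C₂ * Real.sqrt Kp * Real.sqrt U * Real.sqrt V) ^ 2 := by
    calc C₂ ^ 2 * Kp * U * V
        = C₂ ^ 2 * (Real.sqrt Kp ^ 2) * (Real.sqrt U ^ 2) * (Real.sqrt V ^ 2) := by
          rw [Real.sq_sqrt hKp0, Real.sq_sqrt hU0, Real.sq_sqrt hV0]
      _ = (C₂ * Real.sqrt Kp * Real.sqrt U * Real.sqrt V) ^ 2 := by ring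
  have hsqrt : Real.sqrt (C₂ ^ 2 * Kp * U * V) =
      C₂ * Real.sqrt Kp * Real.sqrt U * Real.sqrt V := by
    rw [hsq2]
    exact Real.sqrt_sq (by positivity)
  calc Hnorm (s - m) (paraW δ χ a u v) ≤ Real.sqrt (C₂ ^ 2 * Kp * U * V) :=
      Real.sqrt_le_sqrt hle
    _ = C₂ * Real.sqrt Kp * Real.sqrt U * Real.sqrt V := hsqrt
    _ = C₂ * Real.sqrt Kp * Hnorm s0 u * Hnorm s v := rfl
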